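/- Let Γ be a countably infinite group with a finite symmetric generating set S and Cayley graph 𝒢. Let ε > 0 and let K ⊆ Γ be a finite set containing a non-identity element, such that every normalized positive definite function φ : Γ → [0,1] with min_{g ∈ K} φ(g) ≥ 1 − ε does not vanish at infinity. Set d_K := max_{g ∈ K} |g|. Then for every Γ-invariant bond percolation P on 𝒢 with E[deg_ω(o)] > (1 − ε/(deg(o)·d_K))·deg(o), the two-point function τ(o,·) does not vanish at infinity, i.e., there exists c > 0 such that for every r there exist g,h ∈ Γ with d(g,h) > r and τ(g,h) ≥ c. -/

import Mathlib

open MeasureTheory Filter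
open scoped ComplexOrder symmDiff

namespace InvPerc

variable {Γ : Type*} [Group Γ]

/-- Percolation configurations: indicator functions on unordered pairs of vertices. -/
abbrev Config (Γ : Type*) := Sym2 Γ → Bool

/-- The edge set of the (right) Cayley graph of `Γ` with respect to `S`. -/
def IsCayleyEdge (S : Finset Γ) (e : Sym2 Γ) : Prop :=
  ∃ g : Γ, ∃ t ∈ S, e = s(g, g * t)

/-- The action of `Γ` on configurations induced by left multiplication:
`e ∈ shift γ ω ↔ γ⁻¹ • e ∈ ω`. -/
def shift (γ : Γ) (ω : Config Γ) : Config Γ :=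
  fun e => ω (Sym2.map (fun x => γ⁻¹ * x) e)

/-- `ConnBy ω u v n` : `u` and `v` are joined by a path of at most `n` open edges of `ω`. -/
def ConnBy (ω : Config Γ) (u v : Γ) (n : ℕ) : Prop :=
  ∃ l : List Γ, l.length ≤ n ∧ List.Chain (fun a b => ω s(a, b) = true) u l ∧
    (u :: l).getLast (List.cons_ne_nil u l) = v

/-- `u` and `v` lie in the same cluster of the configuration `ω` (`u ↔ v` in `ω`). -/
def Conn (ω : Config Γ) (u v : Γ) : Prop := ∃ n : ℕ, ConnBy ω u v n

/-- The two-point function `τ(u,v) = P[u ↔ v]`. -/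
noncomputable def tpf (P : Measure (Config Γ)) (u v : Γ) : ℝ :=
  (P {ω | Conn ω u v}).toReal

/-- A `Γ`-invariant bond percolation on the Cayley graph of `(Γ, S)`: a probability
measure on configurations, supported on subsets of the Cayley edge set, invariant under
the action induced by left multiplication. -/
structure IsInvBondPerc (S : Finset Γ) (P : Measure (Config Γ)) : Prop where
  prob : IsProbabilityMeasure P
  supported : P {ω | ∀ e : Sym2 Γ, ω e = true → IsCayleyEdge S e} = 1
  invariant : ∀ γ : Γ, P.map (shift γ) = P

/-- The expected degree of the origin, `E[deg_ω(o)] = ∑_{t ∈ S} P[{o, t} ∈ ω]`. -/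
noncomputable def expDeg (S : Finset Γ) (P : Measure (Config Γ)) : ℝ :=
  ∑ t ∈ S, (P {ω : Config Γ | ω s(1, t) = true}).toReal

/-- The word length of `g` with respect to the generating set `S`. -/
noncomputable def wlen (S : Finset Γ) (g : Γ) : ℕ :=
  sInf {n : ℕ | ∃ l : List Γ, (∀ x ∈ l, x ∈ S) ∧ l.prod = g ∧ l.length = n}

/-- The word metric `d(g,h) = |g⁻¹h|`. -/
noncomputable def wdist (S : Finset Γ) (g h : Γ) : ℕ := wlen S (g⁻¹ * h)

/-- The two-point function of `P` vanishes at infinity: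
`sup {τ(g,h) : d(g,h) > r} → 0` as `r → ∞`. -/
def TpfVanishes (S : Finset Γ) (P : Measure (Config Γ)) : Prop :=
  ∀ ε : ℝ, 0 < ε → ∃ r : ℕ, ∀ g h : Γ, r < wdist S g h → tpf P g h < ε

/-- `S` is a finite symmetric generating set not containing the identity. -/
def IsSymmGen (S : Finset Γ) : Prop :=
  (1 : Γ) ∉ S ∧ (∀ t ∈ S, t⁻¹ ∈ S) ∧
    ∀ g : Γ, ∃ l : List Γ, (∀ x ∈ l, x ∈ S) ∧ l.prod = g

/-- A positive definite function on `Γ`. -/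
def IsPosDef (φ : Γ → ℂ) : Prop :=
  ∀ (n : ℕ) (g : Fin n → Γ) (a : Fin n → ℂ),
    0 ≤ ∑ i : Fin n, ∑ j : Fin n, (starRingEnd ℂ) (a i) * a j * φ ((g i)⁻¹ * g j)

/-- A conditionally negative definite function on `Γ`. -/
def IsCondNegDef (ψ : Γ → ℝ) : Prop :=
  ψ 1 = 0 ∧ (∀ g : Γ, ψ g⁻¹ = ψ g) ∧
    ∀ (n : ℕ) (g : Fin n → Γ) (a : Fin n → ℝ), (∑ i : Fin n, a i) = 0 →
      ∑ i : Fin n, ∑ j : Fin n, a i * a j * ψ ((g i)⁻¹ * g j) ≤ 0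

set_option linter.unusedSectionVars false

private lemma chain_snoc {α : Type*} {R : α → α → Prop} :
    ∀ (l : List α) (u b c : α), List.Chain R u l →
      (u :: l).getLast (List.cons_ne_nil u l) = b → R b c → List.Chain R u (l ++ [c])
  | [], u, b, c, _, hl, hbc => by
      simp at hl; subst hl; simpa [List.Chain] using hbc
  | a :: l, u, b, c, hc, hl, hbc => by
      rw [List.Chain, List.chain_cons] at hc
      exact List.chain_cons.2 ⟨hc.1, chain_snoc l a b c hc.2
        (by simpa [List.getLast_cons] using hl) hbc⟩

lemma conn_iff (ω : Config Γ) (u v : Γ) :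
    Conn ω u v ↔ Relation.ReflTransGen (fun a b => ω s(a, b) = true) u v := by
  constructor
  · rintro ⟨n, l, -, hc, hl⟩
    clear n
    induction l generalizing u with
    | nil => simp at hl; exact hl ▸ Relation.ReflTransGen.refl
    | cons a l ih =>
      rw [List.Chain, List.chain_cons] at hc
      exact Relation.ReflTransGen.head hc.1
        (ih a hc.2 (by simpa [List.getLast_cons] using hl))
  · intro h
    induction h with
    | refl => exact ⟨0, [], by simp, List.Chain.nil, rfl⟩
    | @tail b c hab hbc ih =>
      rcases ih with ⟨n, l, hn, hc, hl⟩
      exact ⟨n+1, l ++ [c], by simpa using Nat.add_le_add_right hn 1,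
        chain_snoc l u b c hc hl hbc, by simp⟩

lemma conn_refl (ω : Config Γ) (u : Γ) : Conn ω u u :=
  (conn_iff ω u u).2 Relation.ReflTransGen.refl

lemma conn_symm {ω : Config Γ} {u v : Γ} (h : Conn ω u v) : Conn ω v u := by
  rw [conn_iff] at h ⊢
  induction h with
  | refl => exact Relation.ReflTransGen.refl
  | @tail b c hab hbc ih =>
    exact Relation.ReflTransGen.head (by rwa [Sym2.eq_swap]) ih

lemma conn_trans {ω : Config Γ} {u v w : Γ} (h : Conn ω u v) (h' : Conn ω v w) :
    Conn ω u w := by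
  rw [conn_iff] at h h' ⊢; exact h.trans h'

lemma conn_shift (γ : Γ) (ω : Config Γ) (u v : Γ) :
    Conn (shift γ ω) u v ↔ Conn ω (γ⁻¹ * u) (γ⁻¹ * v) := by
  rw [conn_iff, conn_iff]
  have he : ∀ a b : Γ, (shift γ ω) s(a,b) = ω s(γ⁻¹*a, γ⁻¹*b) := by
    intro a b; simp [shift]
  constructor
  · intro h
    exact Relation.ReflTransGen.lift (fun x => γ⁻¹ * x) (fun a b hab => show ω s(γ⁻¹*a, γ⁻¹*b) = true from (he a b) ▸ hab) _ _ h
  · intro h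
    have := Relation.ReflTransGen.lift (p := fun a b => (shift γ ω) s(a,b) = true)
      (fun x => γ * x) (fun a b hab => show (shift γ ω) s(γ*a, γ*b) = true by
        rw [he]; simpa using hab) _ _ h
    simpa [Function.onFun] using this

lemma measurableSet_coord (e : Sym2 Γ) : MeasurableSet {ω : Config Γ | ω e = true} := by
  have : {ω : Config Γ | ω e = true} = (fun ω : Config Γ => ω e) ⁻¹' {true} := rfl
  rw [this]
  exact (measurable_pi_apply e) (MeasurableSet.singleton true)

lemma measurableSet_chain (u : Γ) (l : List Γ) :
    MeasurableSet {ω : Config Γ | List.Chain (fun a b => ω s(a, b) = true) u l} := by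
  induction l generalizing u with
  | nil => simpa [List.Chain] using MeasurableSet.univ
  | cons a l ih =>
    have : {ω : Config Γ | List.Chain (fun a b => ω s(a, b) = true) u (a :: l)} =
        {ω : Config Γ | ω s(u, a) = true} ∩
          {ω : Config Γ | List.Chain (fun a b => ω s(a, b) = true) a l} := by
      ext ω; simp [List.Chain, List.chain_cons]
    rw [this]
    exact (measurableSet_coord _).inter (ih a)

lemma conn_iff_list (ω : Config Γ) (u v : Γ) :
    Conn ω u v ↔ ∃ l : List Γ, List.Chain (fun a b => ω s(a, b) = true) u l ∧
      (u :: l).getLast (List.cons_ne_nil u l) = v := by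
  constructor
  · rintro ⟨n, l, -, hc, hl⟩; exact ⟨l, hc, hl⟩
  · rintro ⟨l, hc, hl⟩; exact ⟨l.length, l, le_rfl, hc, hl⟩

lemma measurableSet_conn [Countable Γ] (u v : Γ) :
    MeasurableSet {ω : Config Γ | Conn ω u v} := by
  have : {ω : Config Γ | Conn ω u v} =
      ⋃ (l : List Γ) (_ : (u :: l).getLast (List.cons_ne_nil u l) = v),
        {ω : Config Γ | List.Chain (fun a b => ω s(a, b) = true) u l} := by
    ext ω; simp only [Set.mem_setOf_eq, Set.mem_iUnion, conn_iff_list]; tauto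
  rw [this]
  exact MeasurableSet.iUnion fun l => MeasurableSet.iUnion fun _ => measurableSet_chain u l

lemma measurable_shift (γ : Γ) : Measurable (shift γ : Config Γ → Config Γ) :=
  measurable_pi_lambda _ fun e => measurable_pi_apply _

lemma tpf_translate [Countable Γ] {P : Measure (Config Γ)}
    (hinv : ∀ γ : Γ, P.map (shift γ) = P) (g h : Γ) :
    tpf P g h = tpf P 1 (g⁻¹ * h) := by
  unfold tpf
  congr 1
  have := Measure.map_apply (measurable_shift (g⁻¹ : Γ))
    (measurableSet_conn (1 : Γ) (g⁻¹ * h)) (μ := P)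
  rw [hinv] at this
  rw [this]
  congr 1
  ext ω
  simp [Set.mem_preimage, conn_shift]

lemma edge_translate {P : Measure (Config Γ)}
    (hinv : ∀ γ : Γ, P.map (shift γ) = P) (x t : Γ) :
    P {ω : Config Γ | ω s(x, x * t) = true} = P {ω : Config Γ | ω s(1, t) = true} := by
  have := Measure.map_apply (measurable_shift (x⁻¹ : Γ))
    (measurableSet_coord (s(1, t) : Sym2 Γ)) (μ := P)
  rw [hinv] at this
  rw [this]
  congr 1
  ext ω
  simp [Set.mem_preimage, shift]

open Finset in
lemma equiv_kernel_quad_nonneg {n : ℕ} (r : Fin n → Fin n → Prop)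
    [inst : ∀ i j, Decidable (r i j)] (hr : Equivalence r) (b : Fin n → ℝ) :
    0 ≤ ∑ i : Fin n, ∑ j : Fin n, b i * b j * (if r i j then 1 else 0) := by
  classical
  rcases Nat.eq_zero_or_pos n with hn | hn
  · subst hn; simp
  have hne : ∀ i : Fin n, (univ.filter (fun j => r i j)).Nonempty :=
    fun i => ⟨i, by simp [hr.refl i]⟩
  set rep : Fin n → Fin n := fun i => (univ.filter (fun j => r i j)).min' (hne i) with hrep
  have hrepr : ∀ i, r i (rep i) := by
    intro i
    have := Finset.min'_mem (univ.filter (fun j => r i j)) (hne i)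
    simpa using this
  have hkey : ∀ i j, r i j ↔ rep i = rep j := by
    intro i j
    constructor
    · intro h
      have : (univ.filter (fun k => r i k)) = (univ.filter (fun k => r j k)) := by
        ext k; simp only [mem_filter, mem_univ, true_and]
        exact ⟨fun h' => hr.trans (hr.symm h) h', fun h' => hr.trans h h'⟩
      simp [hrep, this]
    · intro h
      have h1 := hrepr i
      have h2 := hrepr j
      rw [h] at h1
      exact hr.trans h1 (hr.symm h2)
  set c : Fin n → ℝ := fun k => ∑ j ∈ univ.filter (fun j => rep j = k), b j with hc
  have hinner : ∀ i, ∑ j : Fin n, b i * b j * (if r i j then 1 else 0) = b i * c (rep i) := by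
    intro i
    rw [hc]
    rw [Finset.mul_sum]
    rw [← Finset.sum_filter_add_sum_filter_not univ (fun j => r i j)]
    have h2 : ∑ j ∈ univ.filter (fun j => ¬ r i j), b i * b j * (if r i j then 1 else 0) = 0 := by
      apply Finset.sum_eq_zero; intro j hj
      simp only [mem_filter] at hj
      simp [hj.2]
    rw [h2, add_zero]
    have h3 : (univ.filter fun j => r i j) = (univ.filter fun j => rep j = rep i) := by
      ext j; simp only [mem_filter, mem_univ, true_and]
      rw [hkey i j]; exact ⟨fun h => h.symm, fun h => h.symm⟩
    rw [h3]
    apply Finset.sum_congr rfl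
    intro j hj
    simp only [mem_filter, mem_univ, true_and] at hj
    have hrij : r i j := (hkey i j).2 hj.symm
    rw [if_pos hrij]
    ring
  calc (0:ℝ) ≤ ∑ k : Fin n, (c k)^2 := by positivity
  _ = ∑ k : Fin n, ∑ i ∈ univ.filter (fun i => rep i = k), b i * c (rep i) := by
      apply Finset.sum_congr rfl
      intro k _
      have : ∑ i ∈ univ.filter (fun i => rep i = k), b i * c (rep i)
          = ∑ i ∈ univ.filter (fun i => rep i = k), b i * c k := by
        apply Finset.sum_congr rfl; intro i hi
        simp only [mem_filter, mem_univ, true_and] at hi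
        rw [hi]
      rw [this, ← Finset.sum_mul, hc, sq]
  _ = ∑ i : Fin n, b i * c (rep i) := by
      have := Finset.sum_fiberwise_of_maps_to (fun i (_ : i ∈ univ) => Finset.mem_univ (rep i))
        (fun i => b i * c (rep i))
      exact this
  _ = ∑ i : Fin n, ∑ j : Fin n, b i * b j * (if r i j then 1 else 0) := by
      apply Finset.sum_congr rfl; intro i _; rw [hinner i]

lemma tpf_kernel_psd [Countable Γ] (P : Measure (Config Γ)) [IsProbabilityMeasure P]
    {n : ℕ} (g : Fin n → Γ) (b : Fin n → ℝ) :
    0 ≤ ∑ i : Fin n, ∑ j : Fin n, b i * b j * tpf P (g i) (g j) := by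
  classical
  set C : Fin n → Fin n → Set (Config Γ) := fun i j => {ω | Conn ω (g i) (g j)} with hC
  have hCm : ∀ i j, MeasurableSet (C i j) := fun i j => measurableSet_conn _ _
  have hint : ∀ i j : Fin n,
      Integrable (fun ω => b i * b j * Set.indicator (C i j) (fun _ => (1:ℝ)) ω) P :=
    fun i j => ((integrable_const (1:ℝ)).indicator (hCm i j)).const_mul _
  have hval : ∀ i j : Fin n,
      ∫ ω, b i * b j * Set.indicator (C i j) (fun _ => (1:ℝ)) ω ∂P
        = b i * b j * tpf P (g i) (g j) := by
    intro i j
    rw [MeasureTheory.integral_const_mul]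
    congr 1
    have : (fun ω => Set.indicator (C i j) (fun _ => (1:ℝ)) ω) = (C i j).indicator 1 := rfl
    rw [this, integral_indicator_one (hCm i j)]
    rfl
  have key : ∑ i : Fin n, ∑ j : Fin n, b i * b j * tpf P (g i) (g j)
      = ∫ ω, ∑ i : Fin n, ∑ j : Fin n,
          b i * b j * Set.indicator (C i j) (fun _ => (1:ℝ)) ω ∂P := by
    rw [integral_finset_sum _ (fun i _ => integrable_finset_sum _ (fun j _ => hint i j))]
    refine Finset.sum_congr rfl fun i _ => ?_
    rw [integral_finset_sum _ (fun j _ => hint i j)]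
    exact Finset.sum_congr rfl fun j _ => (hval i j).symm
  rw [key]
  apply integral_nonneg
  intro ω
  have hr : Equivalence (fun i j : Fin n => Conn ω (g i) (g j)) :=
    ⟨fun i => conn_refl ω (g i), fun h => conn_symm h, fun h h' => conn_trans h h'⟩
  have := equiv_kernel_quad_nonneg (fun i j : Fin n => Conn ω (g i) (g j)) hr b
  simp only [Set.indicator_apply]
  convert this using 3 <;> rfl

lemma tpf_symm [Countable Γ] (P : Measure (Config Γ)) (u v : Γ) :
    tpf P u v = tpf P v u := by
  unfold tpf
  congr 2
  ext ω
  exact ⟨fun h => conn_symm h, fun h => conn_symm h⟩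

lemma tpf_complex_psd [Countable Γ] (P : Measure (Config Γ)) [IsProbabilityMeasure P]
    {n : ℕ} (g : Fin n → Γ) (a : Fin n → ℂ) :
    0 ≤ ∑ i : Fin n, ∑ j : Fin n,
      (starRingEnd ℂ) (a i) * a j * ((tpf P (g i) (g j) : ℝ) : ℂ) := by
  set T : Fin n → Fin n → ℝ := fun i j => tpf P (g i) (g j) with hT
  have hTsymm : ∀ i j, T i j = T j i := fun i j => tpf_symm P (g i) (g j)
  set x : Fin n → ℝ := fun i => (a i).re with hx
  set y : Fin n → ℝ := fun i => (a i).im with hy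
  have hre : ∀ i j : Fin n, ((starRingEnd ℂ) (a i) * a j * ((T i j : ℝ) : ℂ)).re
      = (x i * x j * T i j + y i * y j * T i j) := by
    intro i j
    simp [Complex.mul_re, Complex.mul_im, hx, hy]
    ring
  have him : ∀ i j : Fin n, ((starRingEnd ℂ) (a i) * a j * ((T i j : ℝ) : ℂ)).im
      = (x i * y j * T i j - y i * x j * T i j) := by
    intro i j
    simp [Complex.mul_re, Complex.mul_im, hx, hy]
    ring
  rw [Complex.le_def]
  constructor
  · have : (∑ i : Fin n, ∑ j : Fin n, (starRingEnd ℂ) (a i) * a j * ((T i j : ℝ) : ℂ)).re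
        = (∑ i : Fin n, ∑ j : Fin n, x i * x j * T i j)
          + ∑ i : Fin n, ∑ j : Fin n, y i * y j * T i j := by
      rw [Complex.re_sum, ← Finset.sum_add_distrib]
      refine Finset.sum_congr rfl fun i _ => ?_
      rw [Complex.re_sum, ← Finset.sum_add_distrib]
      exact Finset.sum_congr rfl fun j _ => hre i j
    rw [this]
    exact add_nonneg (tpf_kernel_psd P g x) (tpf_kernel_psd P g y)
  · have : (∑ i : Fin n, ∑ j : Fin n, (starRingEnd ℂ) (a i) * a j * ((T i j : ℝ) : ℂ)).im
        = (∑ i : Fin n, ∑ j : Fin n, x i * y j * T i j)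
          - ∑ i : Fin n, ∑ j : Fin n, y i * x j * T i j := by
      rw [Complex.im_sum, ← Finset.sum_sub_distrib]
      refine Finset.sum_congr rfl fun i _ => ?_
      rw [Complex.im_sum, ← Finset.sum_sub_distrib]
      exact Finset.sum_congr rfl fun j _ => him i j
    rw [show (0:ℂ).im = 0 from rfl, this]
    have h2 : ∑ i : Fin n, ∑ j : Fin n, y i * x j * T i j
        = ∑ i : Fin n, ∑ j : Fin n, x i * y j * T i j := by
      rw [Finset.sum_comm]
      refine Finset.sum_congr rfl fun i _ => Finset.sum_congr rfl fun j _ => ?_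
      rw [hTsymm j i]
      ring
    rw [h2, sub_self]

def AllOpen (ω : Config Γ) : Γ → List Γ → Prop
  | _, [] => True
  | x, t :: l => ω s(x, x * t) = true ∧ AllOpen ω (x * t) l

lemma allOpen_conn {ω : Config Γ} : ∀ (l : List Γ) (x : Γ),
    AllOpen ω x l → Conn ω x (x * l.prod)
  | [], x, _ => by simpa using conn_refl ω x
  | t :: l, x, h => by
    have h1 : Conn ω x (x * t) := (conn_iff ω _ _).2 (Relation.ReflTransGen.single h.1)
    have h2 := allOpen_conn l (x * t) h.2
    have := conn_trans h1 h2
    simpa [mul_assoc] using this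

lemma measurableSet_allOpen : ∀ (l : List Γ) (x : Γ),
    MeasurableSet {ω : Config Γ | AllOpen ω x l}
  | [], x => by simp [AllOpen]
  | t :: l, x => by
    have : {ω : Config Γ | AllOpen ω x (t :: l)}
        = {ω : Config Γ | ω s(x, x * t) = true} ∩ {ω : Config Γ | AllOpen ω (x * t) l} := by
      ext ω; simp [AllOpen]
    rw [this]
    exact (measurableSet_coord _).inter (measurableSet_allOpen l (x * t))

lemma not_allOpen_bound {P : Measure (Config Γ)} [IsProbabilityMeasure P]
    (hinv : ∀ γ : Γ, P.map (shift γ) = P) :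
    ∀ (l : List Γ) (x : Γ),
      (P {ω : Config Γ | ¬ AllOpen ω x l}).toReal
        ≤ (l.map (fun t => 1 - (P {ω : Config Γ | ω s(1, t) = true}).toReal)).sum
  | [], x => by simp [AllOpen]
  | t :: l, x => by
    have hsub : {ω : Config Γ | ¬ AllOpen ω x (t :: l)}
        ⊆ {ω : Config Γ | ω s(x, x * t) = true}ᶜ ∪ {ω : Config Γ | ¬ AllOpen ω (x * t) l} := by
      intro ω hω
      simp only [AllOpen, Set.mem_setOf_eq, not_and_or] at hω
      rcases hω with h | h
      · exact Or.inl h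
      · exact Or.inr h
    have h1 : P {ω : Config Γ | ¬ AllOpen ω x (t :: l)}
        ≤ P ({ω : Config Γ | ω s(x, x * t) = true}ᶜ)
          + P {ω : Config Γ | ¬ AllOpen ω (x * t) l} :=
      le_trans (measure_mono hsub) (measure_union_le _ _)
    have h2 : (P {ω : Config Γ | ¬ AllOpen ω x (t :: l)}).toReal
        ≤ (P ({ω : Config Γ | ω s(x, x * t) = true}ᶜ)).toReal
          + (P {ω : Config Γ | ¬ AllOpen ω (x * t) l}).toReal := by
      rw [← ENNReal.toReal_add (measure_ne_top P _) (measure_ne_top P _)]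
      exact ENNReal.toReal_mono (ENNReal.add_ne_top.2 ⟨measure_ne_top P _, measure_ne_top P _⟩) h1
    have h3 : (P ({ω : Config Γ | ω s(x, x * t) = true}ᶜ)).toReal
        = 1 - (P {ω : Config Γ | ω s(1, t) = true}).toReal := by
      rw [← edge_translate hinv x t]
      have hc := measure_add_measure_compl (μ := P) (measurableSet_coord (s(x, x*t) : Sym2 Γ))
      rw [measure_univ] at hc
      have := congrArg ENNReal.toReal hc
      rw [ENNReal.toReal_add (measure_ne_top P _) (measure_ne_top P _)] at this
      simp at this
      linarith
    calc (P {ω : Config Γ | ¬ AllOpen ω x (t :: l)}).toReal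
        ≤ (P ({ω : Config Γ | ω s(x, x * t) = true}ᶜ)).toReal
          + (P {ω : Config Γ | ¬ AllOpen ω (x * t) l}).toReal := h2
    _ ≤ (1 - (P {ω : Config Γ | ω s(1, t) = true}).toReal)
          + (l.map (fun t => 1 - (P {ω : Config Γ | ω s(1, t) = true}).toReal)).sum := by
        rw [h3]
        exact add_le_add_right (not_allOpen_bound hinv l (x * t)) _
    _ = ((t :: l).map (fun t => 1 - (P {ω : Config Γ | ω s(1, t) = true}).toReal)).sum := by
        simp

lemma wlen_spec {S : Finset Γ} (hS : IsSymmGen S) (g : Γ) :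
    ∃ l : List Γ, (∀ x ∈ l, x ∈ S) ∧ l.prod = g ∧ l.length = wlen S g := by
  have hne : {n : ℕ | ∃ l : List Γ, (∀ x ∈ l, x ∈ S) ∧ l.prod = g ∧ l.length = n}.Nonempty := by
    obtain ⟨l, h1, h2⟩ := hS.2.2 g
    exact ⟨l.length, l, h1, h2, rfl⟩
  exact Nat.sInf_mem hne

lemma wlen_pos {S : Finset Γ} (hS : IsSymmGen S) {g : Γ} (hg : g ≠ 1) : 1 ≤ wlen S g := by
  by_contra h
  push_neg at h
  interval_cases h' : wlen S g
  obtain ⟨l, -, h2, h3⟩ := wlen_spec hS g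
  rw [h'] at h3
  rw [List.length_eq_zero_iff] at h3
  subst h3
  simp at h2
  exact hg h2.symm

lemma ball_finite {S : Finset Γ} (hS : IsSymmGen S) (r : ℕ) : {g : Γ | wlen S g ≤ r}.Finite := by
  classical
  have : {g : Γ | wlen S g ≤ r}
      ⊆ (fun l : List {x : Γ // x ∈ S} => (l.map Subtype.val).prod) ''
        {l : List {x : Γ // x ∈ S} | l.length ≤ r} := by
    intro g hg
    simp only [Set.mem_setOf_eq] at hg
    obtain ⟨l, h1, h2, h3⟩ := wlen_spec hS g
    refine ⟨l.pmap (fun a h => (⟨a, h⟩ : {x : Γ // x ∈ S})) h1, ?_, ?_⟩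
    · simp only [Set.mem_setOf_eq, List.length_pmap]
      rw [h3.symm] at hg; exact hg
    · show (List.map Subtype.val (l.pmap (fun a h => (⟨a, h⟩ : {x : Γ // x ∈ S})) h1)).prod = g
      rw [List.map_pmap, List.pmap_eq_map]
      simpa using h2
  exact Set.Finite.subset (Set.Finite.image _ (List.finite_length_le _ r)) this

lemma tpf_nonneg (P : Measure (Config Γ)) (u v : Γ) : 0 ≤ tpf P u v :=
  ENNReal.toReal_nonneg

lemma tpf_le_one (P : Measure (Config Γ)) [IsProbabilityMeasure P] (u v : Γ) :
    tpf P u v ≤ 1 := by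
  unfold tpf
  have := prob_le_one (μ := P) (s := {ω | Conn ω u v})
  calc (P {ω | Conn ω u v}).toReal ≤ ENNReal.toReal 1 :=
    ENNReal.toReal_mono (by simp) this
  _ = 1 := by simp

lemma tpf_self (P : Measure (Config Γ)) [IsProbabilityMeasure P] (u : Γ) :
    tpf P u u = 1 := by
  unfold tpf
  have : {ω : Config Γ | Conn ω u u} = Set.univ := by
    ext ω; simp [conn_refl]
  rw [this, measure_univ]
  simp

lemma tpf_compl [Countable Γ] (P : Measure (Config Γ)) [IsProbabilityMeasure P] (u v : Γ) :
    tpf P u v = 1 - (P ({ω : Config Γ | Conn ω u v}ᶜ)).toReal := by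
  have hc := measure_add_measure_compl (μ := P) (measurableSet_conn u v)
  rw [measure_univ] at hc
  have := congrArg ENNReal.toReal hc
  rw [ENNReal.toReal_add (measure_ne_top P _) (measure_ne_top P _)] at this
  simp at this
  unfold tpf
  linarith

end InvPerc

namespace InvPerc

/-- let `(ε, K)` be such that every normalized positive definite function
`φ : Γ → [0,1]` with `min_{g ∈ K} φ(g) ≥ 1 - ε` does not vanish at infinity. Then every
`Γ`-invariant bond percolation with `E[deg_ω(o)] > (1 - ε/(deg(o)·d_K))·deg(o)` has
two-point function not vanishing at infinity. -/
theorem weak_kazhdan_threshold {Γ : Type*} [Group Γ] [Countable Γ] [Infinite Γ]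
    (S : Finset Γ) (hS : IsSymmGen S)
    (ε : ℝ) (hε : 0 < ε) (K : Finset Γ) (hK : ∃ g ∈ K, g ≠ 1)
    (hpair : ∀ φ : Γ → ℝ,
      (∀ g : Γ, 0 ≤ φ g ∧ φ g ≤ 1) → φ 1 = 1 → IsPosDef (fun g => (φ g : ℂ)) →
      (∀ g ∈ K, 1 - ε ≤ φ g) →
      ¬ (∀ c : ℝ, 0 < c → {g : Γ | c ≤ |φ g|}.Finite))
    (dK : ℕ) (hdK : dK = K.sup (wlen S))
    (P : Measure (Config Γ)) (hP : IsInvBondPerc S P)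
    (hdeg : expDeg S P > (1 - ε / ((S.card : ℝ) * (dK : ℝ))) * (S.card : ℝ)) :
    ∃ c : ℝ, 0 < c ∧ ∀ r : ℕ, ∃ g h : Γ, r < wdist S g h ∧ c ≤ tpf P g h := by
  classical
  haveI := hP.prob
  obtain ⟨g0, hg0K, hg0⟩ := hK
  -- S is nonempty
  have hSne : S.Nonempty := by
    rcases Finset.eq_empty_or_nonempty S with h | h
    · exfalso
      have : ∀ g : Γ, g = 1 := by
        intro g
        obtain ⟨l, h1, h2⟩ := hS.2.2 g
        have : l = [] := by
          cases l with
          | nil => rfl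
          | cons a l => exact absurd (h1 a (by simp)) (by simp [h])
        subst this; simpa using h2.symm
      obtain ⟨a, b, hab⟩ := Infinite.instNontrivial (α := Γ)
      exact hab ((this a).trans (this b).symm)
    · exact h
  have hScard : (1 : ℝ) ≤ (S.card : ℝ) := by
    have := Finset.card_pos.2 hSne
    exact_mod_cast this
  have hdK1 : 1 ≤ dK := by
    rw [hdK]
    exact le_trans (wlen_pos hS hg0) (Finset.le_sup hg0K)
  have hdKR : (1 : ℝ) ≤ (dK : ℝ) := by exact_mod_cast hdK1
  set q : Γ → ℝ := fun t => (P {ω : Config Γ | ω s(1, t) = true}).toReal with hq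
  have hq0 : ∀ t, 0 ≤ q t := fun t => ENNReal.toReal_nonneg
  have hq1 : ∀ t, q t ≤ 1 := by
    intro t
    have := prob_le_one (μ := P) (s := {ω : Config Γ | ω s(1, t) = true})
    calc q t ≤ ENNReal.toReal 1 := ENNReal.toReal_mono (by simp) this
    _ = 1 := by simp
  -- expDeg bound rewritten
  have hsum : ∑ t ∈ S, q t > (S.card : ℝ) - ε / dK := by
    have hc0 : (S.card : ℝ) ≠ 0 := by linarith
    have : (1 - ε / ((S.card : ℝ) * (dK : ℝ))) * (S.card : ℝ)
        = (S.card : ℝ) - ε / dK := by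
      field_simp
    rw [this] at hdeg
    exact hdeg
  have hedge : ∀ t ∈ S, 1 - q t < ε / dK := by
    intro t0 ht0
    have herase : ∑ t ∈ S.erase t0, q t ≤ ((S.erase t0).card : ℝ) := by
      calc ∑ t ∈ S.erase t0, q t ≤ ∑ t ∈ S.erase t0, (1:ℝ) :=
        Finset.sum_le_sum fun t _ => hq1 t
      _ = ((S.erase t0).card : ℝ) := by simp
    have hcard : ((S.erase t0).card : ℝ) = (S.card : ℝ) - 1 := by
      rw [Finset.card_erase_of_mem ht0]
      have := Finset.card_pos.2 hSne
      push_cast [Nat.cast_sub (Nat.one_le_iff_ne_zero.2 (Nat.pos_iff_ne_zero.1 this))]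
      ring
    have hsplit : ∑ t ∈ S.erase t0, q t + q t0 = ∑ t ∈ S, q t :=
      Finset.sum_erase_add S q ht0
    have := hsum
    rw [← hsplit] at this
    rw [hcard] at herase
    linarith
  -- lower bound for tpf on K
  have hKbound : ∀ g ∈ K, 1 - ε ≤ tpf P 1 g := by
    intro g hgK
    obtain ⟨l, hl1, hl2, hl3⟩ := wlen_spec hS g
    have hlen : (l.length : ℝ) ≤ (dK : ℝ) := by
      rw [hl3]
      exact_mod_cast (hdK ▸ Finset.le_sup hgK)
    have hboundsum : (l.map (fun t => 1 - q t)).sum ≤ ε := by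
      have hterm : ∀ x ∈ l.map (fun t => 1 - q t), x ≤ ε / dK := by
        intro x hx
        rw [List.mem_map] at hx
        obtain ⟨t, htl, rfl⟩ := hx
        exact le_of_lt (hedge t (hl1 t htl))
      have := List.sum_le_card_nsmul (l.map (fun t => 1 - q t)) (ε / dK) hterm
      rw [List.length_map] at this
      have h2 : (l.length : ℝ) • (ε / dK) = (l.length : ℝ) * (ε / dK) := by
        simp [smul_eq_mul]
      calc (l.map (fun t => 1 - q t)).sum ≤ (l.length : ℝ) * (ε / dK) := by
            simpa [nsmul_eq_mul] using this
      _ ≤ (dK : ℝ) * (ε / dK) := by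
            apply mul_le_mul_of_nonneg_right hlen
            positivity
      _ = ε := by
            field_simp
    have hsubset : {ω : Config Γ | Conn ω 1 g}ᶜ ⊆ {ω : Config Γ | ¬ AllOpen ω 1 l} := by
      intro ω hω
      simp only [Set.mem_compl_iff, Set.mem_setOf_eq] at hω ⊢
      intro hAO
      exact hω (by simpa [hl2] using allOpen_conn l 1 hAO)
    have hP1 : (P ({ω : Config Γ | Conn ω 1 g}ᶜ)).toReal ≤ ε := by
      calc (P ({ω : Config Γ | Conn ω 1 g}ᶜ)).toReal
          ≤ (P {ω : Config Γ | ¬ AllOpen ω 1 l}).toReal :=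
            ENNReal.toReal_mono (measure_ne_top P _) (measure_mono hsubset)
      _ ≤ (l.map (fun t => 1 - q t)).sum := not_allOpen_bound hP.invariant l 1
      _ ≤ ε := hboundsum
    rw [tpf_compl P 1 g]
    linarith
  -- apply hpair
  set φ : Γ → ℝ := fun g => tpf P 1 g with hφ
  have h01 : ∀ g : Γ, 0 ≤ φ g ∧ φ g ≤ 1 := fun g => ⟨tpf_nonneg P 1 g, tpf_le_one P 1 g⟩
  have hone : φ 1 = 1 := tpf_self P 1
  have hpd : IsPosDef (fun g => (φ g : ℂ)) := by
    intro n g a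
    have : ∀ i j : Fin n, φ ((g i)⁻¹ * g j) = tpf P (g i) (g j) := by
      intro i j
      rw [hφ]
      exact (tpf_translate hP.invariant (g i) (g j)).symm
    simp only [this]
    exact tpf_complex_psd P g a
  have hcc := hpair φ h01 hone hpd hKbound
  rw [not_forall] at hcc
  obtain ⟨c, hc⟩ := hcc
  rw [Classical.not_imp] at hc
  obtain ⟨hc0, hcinf⟩ := hc
  refine ⟨c, hc0, fun r => ?_⟩
  have hinf : {g : Γ | c ≤ |φ g|}.Infinite := hcinf
  have hdiff := (hinf.diff (ball_finite hS r)).nonempty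
  obtain ⟨h, hh⟩ := hdiff
  rw [Set.mem_diff] at hh
  refine ⟨1, h, ?_, ?_⟩
  · have : ¬ wlen S h ≤ r := hh.2
    have h2 : wdist S 1 h = wlen S h := by
      unfold wdist; simp
    omega
  · have := hh.1
    simp only [Set.mem_setOf_eq] at this
    rwa [abs_of_nonneg (h01 h).1] at this

end InvPerc
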